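/- arXiv:2603.02013 — 4 statements merged into one kernel-verified Lean document; each statement's English description precedes it below -/
import Mathlib

section
/- Let K be a differential field of characteristic 0 that is closed under integration (∂K = K) and satisfies K† = K (every element is a logarithmic derivative of some nonzero element). Let A ∈ K[∂] be a monic linear differential operator of order r. Then the dimension over the constant field C of the kernel of A in K equals r if and only if A splits over K, i.e., A = (∂ − b₁)⋯(∂ − b_r) for some b₁, …, b_r ∈ K. -/
section Stmt10Aux
set_option linter.unusedSectionVars false

variable {K : Type*} [Field K] [Algebra ℚ K]

def Mf (D : K → K) (b : K) : K → K := fun u => D u - b * u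

def Pf (D : K → K) {n : ℕ} (b : Fin n → K) : K → K :=
  (List.ofFn fun i : Fin n => Mf D (b i)).foldr (· ∘ ·) id

lemma foldr_comp_apply (l : List (K → K)) (g : K → K) (w : K) :
    (l.foldr (· ∘ ·) g) w = (l.foldr (· ∘ ·) id) (g w) := by
  induction l with
  | nil => rfl
  | cons h t ih => simp only [List.foldr_cons, Function.comp_apply, ih]

lemma Pf_succ (D : K → K) {n : ℕ} (b : Fin (n + 1) → K) (w : K) :
    Pf D b w = Mf D (b 0) (Pf D (fun i => b i.succ) w) := by
  simp [Pf, List.ofFn_succ]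


def Af (D : K → K) {n : ℕ} (a : Fin n → K) (w : K) : K :=
  D^[n] w + ∑ j : Fin n, a j * D^[j] w

lemma Pf_snoc (D : K → K) {n : ℕ} (b' : Fin n → K) (b0 : K) (w : K) :
    Pf D (Fin.snoc b' b0) w = Pf D b' (Mf D b0 w) := by
  unfold Pf
  rw [List.ofFn_succ']
  simp only [Fin.snoc_castSucc, Fin.snoc_last, List.concat_eq_append, List.foldr_append,
    List.foldr_cons, List.foldr_nil]
  rw [foldr_comp_apply]
  rfl

def sAux (D : K → K) (b0 : K) : ℕ → K
  | 0 => 1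
  | n + 1 => D (sAux D b0 n) + b0 * sAux D b0 n

def tAux (D : K → K) (b0 : K) : ℕ → ℕ → K
  | 0, _ => 0
  | j + 1, 0 => D (tAux D b0 j 0) + sAux D b0 j
  | j + 1, i + 1 => D (tAux D b0 j (i + 1)) + tAux D b0 j i
variable (D : Derivation ℚ K K)

lemma Dmul (x y : K) : D (x * y) = x * D y + D x * y := by
  rw [Derivation.leibniz, smul_eq_mul, smul_eq_mul]; ring

lemma Pf_add {n : ℕ} (b : Fin n → K) (x y : K) :
    Pf ⇑D b (x + y) = Pf ⇑D b x + Pf ⇑D b y := by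
  induction n with
  | zero => simp [Pf]
  | succ n ih =>
    simp only [Pf_succ, ih, Mf]
    rw [map_add]; ring

lemma Pf_cmul {n : ℕ} (b : Fin n → K) (c x : K) (hc : D c = 0) :
    Pf ⇑D b (c * x) = c * Pf ⇑D b x := by
  induction n with
  | zero => simp [Pf]
  | succ n ih =>
    simp only [Pf_succ, ih, Mf]
    rw [Dmul, hc]; ring

lemma Pf_zero {n : ℕ} (b : Fin n → K) : Pf ⇑D b 0 = 0 := by
  have := Pf_cmul D b 0 0 (map_zero D)
  simpa using this

lemma Pf_lincomb {n : ℕ} (b : Fin n → K) {m : ℕ} (c x : Fin m → K)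
    (hc : ∀ i, D (c i) = 0) :
    Pf ⇑D b (∑ i, c i * x i) = ∑ i, c i * Pf ⇑D b (x i) := by
  induction m with
  | zero => simp [Pf_zero]
  | succ m ih =>
    rw [Fin.sum_univ_succ, Fin.sum_univ_succ, Pf_add, Pf_cmul D b _ _ (hc 0),
      ih _ _ (fun i => hc i.succ)]

lemma first_ker (b y : K) (hy : y ≠ 0) (hyk : Mf ⇑D b y = 0) (w : K)
    (hw : Mf ⇑D b w = 0) : ∃ e, D e = 0 ∧ w = e * y := by
  have hDy : D y = b * y := sub_eq_zero.mp hyk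
  have hDw : D w = b * w := sub_eq_zero.mp hw
  refine ⟨w * y⁻¹, ?_, by field_simp⟩
  have h2 : D y⁻¹ = -y⁻¹ ^ 2 * D y := by
    rw [Derivation.leibniz_inv, smul_eq_mul]
  rw [Dmul, h2, hDy, hDw]
  field_simp
  ring

lemma first_surj (hint : Function.Surjective fun x : K => D x)
    (hlog : ∀ a : K, ∃ y : K, y ≠ 0 ∧ D y / y = a) (b : K) (g : K) :
    ∃ w, Mf ⇑D b w = g := by
  obtain ⟨u, hu, hub⟩ := hlog b
  have hDu : D u = b * u := by
    field_simp at hub; linear_combination hub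
  obtain ⟨z, hz⟩ := hint (g * u⁻¹)
  have hz' : D z = g * u⁻¹ := hz
  refine ⟨u * z, ?_⟩
  unfold Mf
  rw [Dmul, hz', hDu]
  field_simp
  ring

lemma back_lemma (hint : Function.Surjective fun x : K => D x)
    (hlog : ∀ a : K, ∃ y : K, y ≠ 0 ∧ D y / y = a) :
    ∀ (n : ℕ) (b : Fin n → K),
      Function.Surjective (Pf ⇑D b) ∧ ∃ yb : Fin n → K,
        (∀ i, Pf ⇑D b (yb i) = 0) ∧
        (∀ c : Fin n → K, (∀ i, D (c i) = 0) → ∑ i, c i * yb i = 0 → ∀ i, c i = 0) ∧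
        (∀ w, Pf ⇑D b w = 0 → ∃ c : Fin n → K, (∀ i, D (c i) = 0) ∧ w = ∑ i, c i * yb i) := by
  intro n
  induction n with
  | zero =>
    intro b
    refine ⟨fun w => ⟨w, rfl⟩, Fin.elim0, fun i => i.elim0, fun c _ _ i => i.elim0,
      fun w hw => ⟨Fin.elim0, fun i => i.elim0, ?_⟩⟩
    simpa [Pf] using hw
  | succ n ih =>
    intro b
    obtain ⟨surj', yb', sols', ind', span'⟩ := ih (fun i => b i.succ)
    obtain ⟨u, hu, hub⟩ := hlog (b 0)
    have hDu : D u = b 0 * u := by field_simp at hub; linear_combination hub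
    have huk : Mf ⇑D (b 0) u = 0 := by unfold Mf; rw [hDu, sub_self]
    obtain ⟨z, hz⟩ := surj' u
    refine ⟨?_, Fin.cons z yb', ?_, ?_, ?_⟩
    · -- surjectivity
      intro g
      obtain ⟨h, hh⟩ := first_surj D hint hlog (b 0) g
      obtain ⟨w, hw⟩ := surj' h
      exact ⟨w, by rw [Pf_succ, hw, hh]⟩
    · -- solutions
      intro i
      refine Fin.cases ?_ (fun j => ?_) i
      · rw [Pf_succ, Fin.cons_zero, hz, huk]
      · rw [Pf_succ, Fin.cons_succ, sols' j]
        simp [Mf]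
    · -- independence
      intro c hc hsum
      have hsum' : c 0 * z + ∑ i : Fin n, c i.succ * yb' i = 0 := by
        rw [Fin.sum_univ_succ] at hsum
        simpa using hsum
      have happ : Pf ⇑D (fun i => b i.succ) (c 0 * z + ∑ i, c i.succ * yb' i) = c 0 * u := by
        rw [Pf_add, Pf_cmul D _ _ _ (hc 0), hz,
          Pf_lincomb D _ _ _ (fun i => hc i.succ)]
        simp [sols']
      rw [hsum', Pf_zero] at happ
      have hc0 : c 0 = 0 := by
        rcases mul_eq_zero.mp happ.symm with h | h
        · exact h
        · exact absurd h hu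
      have hrest : ∑ i, c i.succ * yb' i = 0 := by
        rw [hc0] at hsum'; simpa using hsum'
      have := ind' (fun i => c i.succ) (fun i => hc i.succ) hrest
      intro i
      refine Fin.cases hc0 (fun j => this j) i
    · -- spanning
      intro w hw
      rw [Pf_succ] at hw
      obtain ⟨e, he, heq⟩ := first_ker D (b 0) u hu huk _ hw
      have hsub : Pf ⇑D (fun i => b i.succ) (w - e * z) = 0 := by
        have h1 : Pf ⇑D (fun i => b i.succ) ((w - e * z) + e * z)
            = Pf ⇑D (fun i => b i.succ) (w - e * z) + e * u := by
          rw [Pf_add, Pf_cmul D _ _ _ he, hz]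
        rw [sub_add_cancel, heq] at h1
        linear_combination -h1
      obtain ⟨d, hd, hdeq⟩ := span' _ hsub
      refine ⟨Fin.cons e d, ?_, ?_⟩
      · intro i; refine Fin.cases he (fun j => hd j) i
      · rw [Fin.sum_univ_succ]
        simp only [Fin.cons_zero, Fin.cons_succ]
        have : w = (w - e * z) + e * z := by ring
        rw [this, hdeq]; ring
    


lemma iterD_zero (n : ℕ) : (⇑D)^[n] (0 : K) = 0 := by
  induction n with
  | zero => rfl
  | succ n ih => rw [Function.iterate_succ_apply', ih, map_zero]

lemma Af_zero {n : ℕ} (a : Fin n → K) : Af ⇑D a 0 = 0 := by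
  simp [Af, iterD_zero]

lemma M_lincomb (b : K) {m : ℕ} (c x : Fin m → K) (hc : ∀ i, D (c i) = 0) :
    Mf ⇑D b (∑ i, c i * x i) = ∑ i, c i * Mf ⇑D b (x i) := by
  unfold Mf
  rw [map_sum, Finset.mul_sum, ← Finset.sum_sub_distrib]
  refine Finset.sum_congr rfl fun i _ => ?_
  rw [Dmul, hc i]; ring


lemma tAux_zero (b0 : K) : ∀ j i, j ≤ i → tAux ⇑D b0 j i = 0 := by
  intro j
  induction j with
  | zero => intro i _; rfl
  | succ j ih =>
    intro i hi
    obtain ⟨i', rfl⟩ : ∃ i', i = i' + 1 := ⟨i - 1, by omega⟩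
    show D (tAux ⇑D b0 j (i' + 1)) + tAux ⇑D b0 j i' = 0
    rw [ih _ (by omega), ih _ (by omega), map_zero, add_zero]

lemma tAux_top (b0 : K) : ∀ j, tAux ⇑D b0 (j + 1) j = 1 := by
  intro j
  induction j with
  | zero =>
    show D (tAux ⇑D b0 0 0) + sAux ⇑D b0 0 = 1
    show D 0 + sAux ⇑D b0 0 = 1
    rw [map_zero, zero_add]; rfl
  | succ j ih =>
    show D (tAux ⇑D b0 (j + 1) (j + 1)) + tAux ⇑D b0 (j + 1) j = 1
    rw [tAux_zero D b0 (j + 1) (j + 1) le_rfl, map_zero, zero_add, ih]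

lemma key_expand (b0 : K) : ∀ (j : ℕ) (w : K),
    (⇑D)^[j] w = (∑ i ∈ Finset.range j, tAux ⇑D b0 j i * (⇑D)^[i] (D w - b0 * w))
      + sAux ⇑D b0 j * w := by
  intro j
  induction j with
  | zero =>
    intro w
    show w = _ + sAux ⇑D b0 0 * w
    rw [Finset.range_zero, Finset.sum_empty]
    show w = 0 + 1 * w
    ring
  | succ j ih =>
    intro w
    set v := D w - b0 * w with hv
    have hDw : D w = v + b0 * w := by rw [hv]; ring
    have step1 : (⇑D)^[j+1] w
        = ∑ i ∈ Finset.range j, (tAux ⇑D b0 j i * (⇑D)^[i+1] v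
            + D (tAux ⇑D b0 j i) * (⇑D)^[i] v)
          + (sAux ⇑D b0 j * (v + b0 * w) + D (sAux ⇑D b0 j) * w) := by
      rw [Function.iterate_succ_apply', ih w, map_add, map_sum]
      congr 1
      · refine Finset.sum_congr rfl fun i _ => ?_
        rw [Dmul, Function.iterate_succ_apply']
      · rw [Dmul, hDw]
    have hsum2 : ∑ i ∈ Finset.range j, D (tAux ⇑D b0 j i) * (⇑D)^[i] v
        = ∑ i ∈ Finset.range j, D (tAux ⇑D b0 j (i + 1)) * (⇑D)^[i+1] v
          + D (tAux ⇑D b0 j 0) * (⇑D)^[0] v := by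
      have h1 : ∑ i ∈ Finset.range j, D (tAux ⇑D b0 j i) * (⇑D)^[i] v
          = ∑ i ∈ Finset.range (j + 1), D (tAux ⇑D b0 j i) * (⇑D)^[i] v := by
        rw [Finset.sum_range_succ, tAux_zero D b0 j j le_rfl, map_zero, zero_mul, add_zero]
      rw [h1, Finset.sum_range_succ']
    rw [step1, Finset.sum_add_distrib, hsum2]
    rw [Finset.sum_range_succ' (fun i => tAux ⇑D b0 (j + 1) i * (⇑D)^[i] v) j]
    show _ = ∑ i ∈ Finset.range j,
        (D (tAux ⇑D b0 j (i + 1)) + tAux ⇑D b0 j i) * (⇑D)^[i+1] v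
      + (D (tAux ⇑D b0 j 0) + sAux ⇑D b0 j) * (⇑D)^[0] v
      + (D (sAux ⇑D b0 j) + b0 * sAux ⇑D b0 j) * w
    simp only [add_mul, Finset.sum_add_distrib, Function.iterate_zero_apply]
    ring

lemma division (r : ℕ) (a : Fin (r + 1) → K) (b0 : K) :
    ∃ (c : Fin r → K) (ρ : K), ∀ w : K,
      (⇑D)^[r+1] w + ∑ j : Fin (r + 1), a j * (⇑D)^[(j : ℕ)] w
        = ((⇑D)^[r] (D w - b0 * w)
            + ∑ i : Fin r, c i * (⇑D)^[(i : ℕ)] (D w - b0 * w)) + ρ * w := by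
  refine ⟨fun i => tAux ⇑D b0 (r + 1) ↑i + ∑ j : Fin (r + 1), a j * tAux ⇑D b0 ↑j ↑i,
    sAux ⇑D b0 (r + 1) + ∑ j : Fin (r + 1), a j * sAux ⇑D b0 ↑j, fun w => ?_⟩
  set v := D w - b0 * w with hv
  have hkey := key_expand D b0
  have step1 : (⇑D)^[r+1] w + ∑ j : Fin (r + 1), a j * (⇑D)^[(j : ℕ)] w
      = (∑ i ∈ Finset.range (r + 1), tAux ⇑D b0 (r + 1) i * (⇑D)^[i] v
          + sAux ⇑D b0 (r + 1) * w)
        + ∑ j : Fin (r + 1), a j * ((∑ i ∈ Finset.range ↑j, tAux ⇑D b0 ↑j i * (⇑D)^[i] v)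
            + sAux ⇑D b0 ↑j * w) := by
    rw [hkey (r + 1) w]
    congr 1
    exact Finset.sum_congr rfl fun j _ => by rw [hkey ↑j w]
  have step2 : ∀ j : Fin (r + 1),
      ∑ i ∈ Finset.range ↑j, tAux ⇑D b0 ↑j i * (⇑D)^[i] v
        = ∑ i ∈ Finset.range (r + 1), tAux ⇑D b0 ↑j i * (⇑D)^[i] v := by
    intro j
    refine Finset.sum_subset (Finset.range_subset_range.2 (Nat.le_of_lt j.2)) ?_
    intro i _ hi
    rw [tAux_zero D b0 _ _ (by simp only [Finset.mem_range, not_lt] at hi; exact hi), zero_mul]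
  have step3 : ∑ j : Fin (r + 1), a j * ((∑ i ∈ Finset.range (r + 1),
        tAux ⇑D b0 ↑j i * (⇑D)^[i] v) + sAux ⇑D b0 ↑j * w)
      = ∑ i ∈ Finset.range (r + 1), (∑ j : Fin (r + 1), a j * tAux ⇑D b0 ↑j i) * (⇑D)^[i] v
        + (∑ j : Fin (r + 1), a j * sAux ⇑D b0 ↑j) * w := by
    rw [Finset.sum_mul]
    simp only [mul_add, Finset.sum_add_distrib]
    congr 1
    · simp_rw [Finset.mul_sum, Finset.sum_mul, mul_assoc]
      exact Finset.sum_comm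
    · exact Finset.sum_congr rfl fun j _ => (mul_assoc _ _ _).symm
  have step4 : ∑ i ∈ Finset.range (r + 1), tAux ⇑D b0 (r + 1) i * (⇑D)^[i] v
        + ∑ i ∈ Finset.range (r + 1), (∑ j : Fin (r + 1), a j * tAux ⇑D b0 ↑j i) * (⇑D)^[i] v
      = ∑ i ∈ Finset.range (r + 1),
          (tAux ⇑D b0 (r + 1) i + ∑ j : Fin (r + 1), a j * tAux ⇑D b0 ↑j i) * (⇑D)^[i] v := by
    rw [← Finset.sum_add_distrib]
    exact Finset.sum_congr rfl fun i _ => (add_mul _ _ _).symm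
  have hCr : tAux ⇑D b0 (r + 1) r + ∑ j : Fin (r + 1), a j * tAux ⇑D b0 ↑j r = 1 := by
    rw [tAux_top]
    have h0 : ∑ j : Fin (r + 1), a j * tAux ⇑D b0 ↑j r = 0 := by
      refine Finset.sum_eq_zero fun j _ => ?_
      rw [tAux_zero D b0 _ _ (Nat.le_of_lt_succ j.2), mul_zero]
    rw [h0, add_zero]
  have step5 : ∑ i ∈ Finset.range (r + 1),
        (tAux ⇑D b0 (r + 1) i + ∑ j : Fin (r + 1), a j * tAux ⇑D b0 ↑j i) * (⇑D)^[i] v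
      = (⇑D)^[r] v + ∑ i ∈ Finset.range r,
          (tAux ⇑D b0 (r + 1) i + ∑ j : Fin (r + 1), a j * tAux ⇑D b0 ↑j i) * (⇑D)^[i] v := by
    rw [Finset.sum_range_succ, hCr, one_mul]
    ring
  have hfin : ∑ i : Fin r,
        (tAux ⇑D b0 (r + 1) ↑i + ∑ j : Fin (r + 1), a j * tAux ⇑D b0 ↑j ↑i)
          * (⇑D)^[(i : ℕ)] v
      = ∑ i ∈ Finset.range r,
          (tAux ⇑D b0 (r + 1) i + ∑ j : Fin (r + 1), a j * tAux ⇑D b0 ↑j i) * (⇑D)^[i] v :=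
    Fin.sum_univ_eq_sum_range
      (fun i => (tAux ⇑D b0 (r + 1) i + ∑ j : Fin (r + 1), a j * tAux ⇑D b0 ↑j i)
        * (⇑D)^[i] v) r
  have step2' : ∑ j : Fin (r + 1), a j * ((∑ i ∈ Finset.range ↑j,
        tAux ⇑D b0 ↑j i * (⇑D)^[i] v) + sAux ⇑D b0 ↑j * w)
      = ∑ j : Fin (r + 1), a j * ((∑ i ∈ Finset.range (r + 1),
        tAux ⇑D b0 ↑j i * (⇑D)^[i] v) + sAux ⇑D b0 ↑j * w) :=
    Finset.sum_congr rfl fun j _ => by rw [step2 j]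
  rw [step1, step2', step3, hfin]
  linear_combination step4 + step5


lemma fwd_lemma (hint : Function.Surjective fun x : K => D x)
    (hlog : ∀ a : K, ∃ y : K, y ≠ 0 ∧ D y / y = a) :
    ∀ (n : ℕ) (a : Fin n → K),
      (∃ yb : Fin n → K,
        (∀ i, Af ⇑D a (yb i) = 0) ∧
        (∀ c : Fin n → K, (∀ i, D (c i) = 0) → ∑ i, c i * yb i = 0 → ∀ i, c i = 0) ∧
        (∀ w, Af ⇑D a w = 0 → ∃ c : Fin n → K, (∀ i, D (c i) = 0) ∧ w = ∑ i, c i * yb i)) →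
      ∃ b : Fin n → K, ∀ w, Af ⇑D a w = Pf ⇑D b w := by
  intro n
  induction n with
  | zero =>
    intro a _
    exact ⟨Fin.elim0, fun w => by simp [Af, Pf]⟩
  | succ n ih =>
    rintro a ⟨yb, hsol, hind, hspan⟩
    have hy : yb 0 ≠ 0 := by
      intro h0
      have hc : ∀ i : Fin (n + 1), D ((fun i => if i = 0 then (1 : K) else 0) i) = 0 := by
        intro i; by_cases h : i = 0 <;> simp [h]
      have hsum : ∑ i : Fin (n + 1), (if i = 0 then (1 : K) else 0) * yb i = 0 := by
        rw [Finset.sum_eq_single 0]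
        · simp [h0]
        · intro b _ hb; simp [hb]
        · intro h; exact absurd (Finset.mem_univ _) h
      have := hind _ hc hsum 0
      simp at this
    have hyk : Mf ⇑D (D (yb 0) / yb 0) (yb 0) = 0 := by
      unfold Mf; field_simp; ring
    obtain ⟨c, ρ, hdiv⟩ := division D n a (D (yb 0) / yb 0)
    have hdiv' : ∀ w, Af ⇑D a w
        = Af ⇑D c (Mf ⇑D (D (yb 0) / yb 0) w) + ρ * w := fun w => hdiv w
    have hρ : ρ = 0 := by
      have h1 := hdiv' (yb 0)
      rw [hsol 0, hyk, Af_zero, zero_add] at h1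
      rcases mul_eq_zero.mp h1.symm with h | h
      · exact h
      · exact absurd h hy
    have hA : ∀ w, Af ⇑D a w = Af ⇑D c (Mf ⇑D (D (yb 0) / yb 0) w) := by
      intro w; rw [hdiv' w, hρ, zero_mul, add_zero]
    have hker := first_ker D (D (yb 0) / yb 0) (yb 0) hy hyk
    have hsol' : ∀ i : Fin n, Af ⇑D c (Mf ⇑D (D (yb 0) / yb 0) (yb i.succ)) = 0 := fun i => by
      rw [← hA (yb i.succ)]; exact hsol i.succ
    have hind' : ∀ d : Fin n → K, (∀ i, D (d i) = 0) →
        ∑ i, d i * Mf ⇑D (D (yb 0) / yb 0) (yb i.succ) = 0 → ∀ i, d i = 0 := by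
      intro d hd hsum
      have h1 : Mf ⇑D (D (yb 0) / yb 0) (∑ i : Fin n, d i * yb i.succ) = 0 := by
        rw [M_lincomb D _ _ _ hd]; exact hsum
      obtain ⟨e, he, heq⟩ := hker _ h1
      have hcons : ∀ i : Fin (n + 1), D ((Fin.cons (-e) d : Fin (n + 1) → K) i) = 0 := by
        intro i
        refine Fin.cases ?_ (fun j => by rw [Fin.cons_succ]; exact hd j) i
        rw [Fin.cons_zero, map_neg, he, neg_zero]
      have hsum2 : ∑ i : Fin (n + 1), (Fin.cons (-e) d : Fin (n + 1) → K) i * yb i = 0 := by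
        rw [Fin.sum_univ_succ]
        simp only [Fin.cons_zero, Fin.cons_succ]
        rw [heq]; ring
      have hall := hind _ hcons hsum2
      intro i
      have := hall i.succ
      rwa [Fin.cons_succ] at this
    have hspan' : ∀ v, Af ⇑D c v = 0 → ∃ d : Fin n → K, (∀ i, D (d i) = 0) ∧
        v = ∑ i, d i * Mf ⇑D (D (yb 0) / yb 0) (yb i.succ) := by
      intro v hv
      obtain ⟨w, hw⟩ := first_surj D hint hlog (D (yb 0) / yb 0) v
      have hAw : Af ⇑D a w = 0 := by rw [hA w, hw]; exact hv
      obtain ⟨d, hd, hdeq⟩ := hspan w hAw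
      refine ⟨fun i => d i.succ, fun i => hd i.succ, ?_⟩
      rw [← hw, hdeq, M_lincomb D _ _ _ hd, Fin.sum_univ_succ, hyk, mul_zero, zero_add]
    obtain ⟨b', hb'⟩ := ih c ⟨_, hsol', hind', hspan'⟩
    refine ⟨Fin.snoc b' (D (yb 0) / yb 0), fun w => ?_⟩
    rw [Pf_snoc, ← hb', hA w]

end Stmt10Aux

/-- Let `K` be a differential field of characteristic 0 closed under integration
(`∂K = K`) with `K† = K`. Let `A = ∂^r + a_{r-1}∂^{r-1} + ⋯ + a_0` be a monic linear
differential operator of order `r` over `K`. Then the kernel of `A` in `K` has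
dimension `r` over the constant field `C = ker ∂` (expressed: there are `r` solutions
which are `C`-linearly independent and `C`-span the kernel) if and only if `A` splits
over `K`, i.e. `A = (∂ - b₁)⋯(∂ - b_r)` for some `b₁, …, b_r ∈ K` (as an identity of
operators acting on `K`). -/
theorem stmt_10 {K : Type*} [Field K] [Algebra ℚ K] (D : Derivation ℚ K K)
    (hint : Function.Surjective fun x : K => D x)
    (hlog : ∀ a : K, ∃ y : K, y ≠ 0 ∧ D y / y = a)
    (r : ℕ) (a : Fin r → K) :
    (∃ yb : Fin r → K,
      (∀ i, (⇑D)^[r] (yb i) + ∑ j : Fin r, a j * (⇑D)^[(j : ℕ)] (yb i) = 0) ∧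
      (∀ c : Fin r → K, (∀ i, D (c i) = 0) → ∑ i, c i * yb i = 0 → ∀ i, c i = 0) ∧
      (∀ w : K, (⇑D)^[r] w + ∑ j : Fin r, a j * (⇑D)^[(j : ℕ)] w = 0 →
        ∃ c : Fin r → K, (∀ i, D (c i) = 0) ∧ w = ∑ i, c i * yb i)) ↔
    (∃ b : Fin r → K, ∀ w : K,
      (⇑D)^[r] w + ∑ j : Fin r, a j * (⇑D)^[(j : ℕ)] w =
        (List.ofFn fun i : Fin r => fun u : K => D u - b i * u).foldr (· ∘ ·) id w) := by
  have hAf : ∀ (w : K), Af ⇑D a w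
      = (⇑D)^[r] w + ∑ j : Fin r, a j * (⇑D)^[(j : ℕ)] w := fun _ => rfl
  have hPf : ∀ (b : Fin r → K) (w : K), Pf ⇑D b w
      = (List.ofFn fun i : Fin r => fun u : K => D u - b i * u).foldr (· ∘ ·) id w :=
    fun _ _ => rfl
  simp only [← hAf, ← hPf]
  constructor
  · intro h
    exact fwd_lemma D hint hlog r a h
  · rintro ⟨b, hb⟩
    obtain ⟨-, yb, hsol, hind, hspan⟩ := back_lemma D hint hlog r b
    exact ⟨yb, fun i => by rw [hb]; exact hsol i, hind,
      fun w hw => hspan w (by rw [← hb]; exact hw)⟩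
end

section
/- Let (Γ, ψ) be an asymptotic couple, with notation γ' = γ + ψ(γ) for γ ∈ Γ^{≠}. For all α, β ∈ Γ with α ≠ β, α < (Γ^{>})' and β < (Γ^{>})' (meaning α < γ + ψ(γ) and β < γ + ψ(γ) for every γ > 0 in Γ), one has ψ(α − β) > min{α, β}. -/
/-- In an asymptotic couple `(Γ, ψ)` (ordered abelian group `Γ` with
`ψ : Γ^{≠} → Γ` satisfying (AC1)–(AC3)): for all `α ≠ β` in `Γ` with
`α, β < (Γ^{>})'` (i.e. `α < γ + ψ(γ)` and `β < γ + ψ(γ)` for all `γ > 0`),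
one has `ψ(α - β) > min {α, β}`. -/
theorem stmt_13 {Γ : Type*} [AddCommGroup Γ] [LinearOrder Γ] [IsOrderedAddMonoid Γ] (ψ : Γ → Γ)
    (AC1 : ∀ α β : Γ, α ≠ 0 → β ≠ 0 → α + β ≠ 0 → min (ψ α) (ψ β) ≤ ψ (α + β))
    (AC2 : ∀ (k : ℤ) (α : Γ), k ≠ 0 → α ≠ 0 → ψ (k • α) = ψ α)
    (AC3 : ∀ α β : Γ, α ≠ 0 → β ≠ 0 → 0 < α → ψ β < α + ψ α)
    (α β : Γ) (hne : α ≠ β)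
    (hα : ∀ γ : Γ, 0 < γ → α < γ + ψ γ)
    (hβ : ∀ γ : Γ, 0 < γ → β < γ + ψ γ) :
    min α β < ψ (α - β) := by
  rcases lt_or_gt_of_ne hne with h | h
  · -- α < β, so min = α; use hβ at γ = β - α
    have hγ : (0:Γ) < β - α := sub_pos.mpr h
    have h1 := hβ (β - α) hγ
    have h2 : α < ψ (β - α) := by
      have := sub_lt_sub_right h1 (β - α)
      rw [sub_sub_cancel] at this
      simpa using this
    have h3 : ψ (α - β) = ψ (β - α) := by
      have := AC2 (-1) (β - α) (by norm_num) (ne_of_gt hγ)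
      simpa [neg_sub] using this
    rw [min_eq_left h.le, h3]
    exact h2
  · -- β < α
    have hγ : (0:Γ) < α - β := sub_pos.mpr h
    have h1 := hα (α - β) hγ
    rw [min_eq_right h.le]
    have := sub_lt_sub_right h1 (α - β)
    rw [sub_sub_cancel] at this
    simpa using this
end

section
/- Let g₁, g₂ : [a, ∞) → ℝ be continuous with g₁(t), g₂(t) > 0 eventually, and let φ₂ : [a, ∞) → ℝ be continuous with φ₂(t) → ∞ as t → ∞. Suppose g₁(t)/g₂(t) → 1 as t → ∞, and there exist reals A, B, C, D with g₁² = g₂²·(A²·cos²(φ₂ + B) + C²·cos²(φ₂ + D)) on a neighborhood of ∞. Then the 2π-periodic function F(t) = A²cos²(t+B) + C²cos²(t+D) is identically equal to 1, and consequently g₁ = g₂ eventually. -/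
open Filter

/-- Key step in the uniqueness of amplitude functions: if `g₁/g₂ → 1`, `φ₂ → ∞`
continuously, and eventually
`g₁² = g₂²·(A²cos²(φ₂+B) + C²cos²(φ₂+D))`, then the `2π`-periodic function
`F(t) = A²cos²(t+B) + C²cos²(t+D)` is identically `1`, and hence `g₁ = g₂`
eventually. -/
theorem stmt_14 (a : ℝ) (g₁ g₂ φ₂ : ℝ → ℝ)
    (hg₁ : ContinuousOn g₁ (Set.Ici a)) (hg₂ : ContinuousOn g₂ (Set.Ici a))
    (hφc : ContinuousOn φ₂ (Set.Ici a))
    (hpos₁ : ∀ᶠ t in atTop, 0 < g₁ t) (hpos₂ : ∀ᶠ t in atTop, 0 < g₂ t)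
    (hφtop : Tendsto φ₂ atTop atTop)
    (hratio : Tendsto (fun t => g₁ t / g₂ t) atTop (nhds 1))
    (A B C D : ℝ)
    (heq : ∀ᶠ t in atTop,
      g₁ t ^ 2 = g₂ t ^ 2 *
        (A ^ 2 * Real.cos (φ₂ t + B) ^ 2 + C ^ 2 * Real.cos (φ₂ t + D) ^ 2)) :
    (∀ s : ℝ, A ^ 2 * Real.cos (s + B) ^ 2 + C ^ 2 * Real.cos (s + D) ^ 2 = 1) ∧
    ∀ᶠ t in atTop, g₁ t = g₂ t := by
  set F : ℝ → ℝ := fun s => A ^ 2 * Real.cos (s + B) ^ 2 + C ^ 2 * Real.cos (s + D) ^ 2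
    with hF
  -- F is 2π ℤ-periodic
  have hper : ∀ (s : ℝ) (n : ℤ), F (s + n * (2 * Real.pi)) = F s := by
    intro s n
    simp only [hF]
    have h1 : s + n * (2 * Real.pi) + B = (s + B) + n * (2 * Real.pi) := by ring
    have h2 : s + n * (2 * Real.pi) + D = (s + D) + n * (2 * Real.pi) := by ring
    rw [h1, h2, Real.cos_add_int_mul_two_pi, Real.cos_add_int_mul_two_pi]
  -- F ∘ φ₂ → 1
  have hlim : Tendsto (fun t => F (φ₂ t)) atTop (nhds 1) := by
    have h1 : Tendsto (fun t => (g₁ t / g₂ t) ^ 2) atTop (nhds 1) := by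
      have := hratio.pow 2
      simpa using this
    refine h1.congr' ?_
    filter_upwards [heq, hpos₂] with t ht h2
    rw [div_pow, ht]
    field_simp
    rfl
  -- F ≡ 1
  have hFone : ∀ s : ℝ, F s = 1 := by
    intro s
    by_contra hne
    have hε : 0 < |F s - 1| := abs_pos.mpr (sub_ne_zero.mpr hne)
    rw [Metric.tendsto_atTop] at hlim
    obtain ⟨T, hT⟩ := hlim _ hε
    set T' := max T a with hT'
    -- choose n with s + n·2π ≥ φ₂ T'
    set n : ℤ := ⌈(φ₂ T' - s) / (2 * Real.pi)⌉ with hn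
    have h2π : (0:ℝ) < 2 * Real.pi := by positivity
    have hge : φ₂ T' ≤ s + n * (2 * Real.pi) := by
      have := Int.le_ceil ((φ₂ T' - s) / (2 * Real.pi))
      have := (div_le_iff₀ h2π).mp this
      linarith
    -- find t₁ ≥ T' with φ₂ t₁ ≥ s + n·2π
    obtain ⟨t₁, ht₁⟩ := ((hφtop.eventually
      (eventually_ge_atTop (s + n * (2 * Real.pi)))).and
      (eventually_ge_atTop T')).exists
    have hsub : Set.Icc T' t₁ ⊆ Set.Ici a := fun x hx =>
      le_trans (le_max_right T a) hx.1
    have hivt := intermediate_value_Icc ht₁.2 (hφc.mono hsub)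
    obtain ⟨t, htmem, htval⟩ := hivt ⟨hge, ht₁.1⟩
    have hTt : T ≤ t := le_trans (le_max_left T a) htmem.1
    have := hT t hTt
    rw [htval, hper s n] at this
    rw [Real.dist_eq] at this
    exact lt_irrefl _ (lt_of_le_of_lt (le_refl _) this) |>.elim
  refine ⟨hFone, ?_⟩
  filter_upwards [heq, hpos₁, hpos₂] with t ht h1 h2
  have h3 := hFone (φ₂ t)
  simp only [hF] at h3
  rw [h3, mul_one] at ht
  nlinarith
end

section
/- Let f : [a, ∞) → ℝ be continuously differentiable with f(t) > 0 for all t, and y : [a, ∞) → ℝ twice continuously differentiable with y'' + f·y = 0, y not identically zero. Define u = y² + (y')²/f. Then u' = −f'·(y'/f)². Consequently, if f is (weakly) increasing on [a,∞) and t₀ < t₁ are points with y'(t₀) = y'(t₁) = 0, then |y(t₀)| ≥ |y(t₁)|; if f is (weakly) decreasing then |y(t₀)| ≤ |y(t₁)|. -/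
lemma slope_deriv_nonneg (a t c : ℝ) {f : ℝ → ℝ} (hat : a ≤ t)
    (hm : MonotoneOn f (Set.Ici a)) (h : HasDerivAt f c t) : 0 ≤ c := by
  have h' := (h.hasDerivWithinAt (s := Set.Ioi t))
  rw [hasDerivWithinAt_iff_tendsto_slope] at h'
  have hset : Set.Ioi t \ {t} = Set.Ioi t := by simp
  rw [hset] at h'
  refine ge_of_tendsto h' ?_
  filter_upwards [self_mem_nhdsWithin] with x hx
  have hx' : t < x := hx
  have hfx : f t ≤ f x := hm hat (le_trans hat hx'.le) hx'.le
  have : 0 < x - t := by linarith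
  rw [slope_def_field]
  have : 0 ≤ f x - f t := by linarith
  rw [div_eq_mul_inv]
  positivity

lemma slope_deriv_nonpos (a t c : ℝ) {f : ℝ → ℝ} (hat : a ≤ t)
    (hm : AntitoneOn f (Set.Ici a)) (h : HasDerivAt f c t) : c ≤ 0 := by
  have := slope_deriv_nonneg a t (-c) hat hm.neg h.neg
  linarith

/-- Sonin–Pólya: if `f > 0` is continuously differentiable and `y'' + f y = 0`
with `y` not identically zero, then `u = y² + (y')²/f` satisfies
`u' = -f'·(y'/f)²`; consequently if `f` is increasing then `|y|` is decreasing along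
critical points, and if `f` is decreasing then `|y|` is increasing along them. -/
theorem stmt_16 (a : ℝ) (f f' y y' y'' : ℝ → ℝ)
    (hf : ∀ t, a ≤ t → HasDerivAt f (f' t) t)
    (hy : ∀ t, a ≤ t → HasDerivAt y (y' t) t)
    (hy' : ∀ t, a ≤ t → HasDerivAt y' (y'' t) t)
    (hf'c : ContinuousOn f' (Set.Ici a)) (hy''c : ContinuousOn y'' (Set.Ici a))
    (hfpos : ∀ t, a ≤ t → 0 < f t)
    (hode : ∀ t, a ≤ t → y'' t + f t * y t = 0)
    (hynz : ∃ t, a ≤ t ∧ y t ≠ 0) :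
    (∀ t, a ≤ t →
      HasDerivAt (fun s => y s ^ 2 + y' s ^ 2 / f s) (-f' t * (y' t / f t) ^ 2) t) ∧
    (MonotoneOn f (Set.Ici a) →
      ∀ t₀ t₁, a ≤ t₀ → t₀ < t₁ → y' t₀ = 0 → y' t₁ = 0 → |y t₁| ≤ |y t₀|) ∧
    (AntitoneOn f (Set.Ici a) →
      ∀ t₀ t₁, a ≤ t₀ → t₀ < t₁ → y' t₀ = 0 → y' t₁ = 0 → |y t₀| ≤ |y t₁|) := by
  set u : ℝ → ℝ := fun s => y s ^ 2 + y' s ^ 2 / f s with hu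
  have hderiv : ∀ t, a ≤ t → HasDerivAt u (-f' t * (y' t / f t) ^ 2) t := by
    intro t ht
    have hfne : f t ≠ 0 := (hfpos t ht).ne'
    have h1 : HasDerivAt (fun s => y s ^ 2) (2 * y t ^ 1 * y' t) t := (hy t ht).pow 2
    have h2 : HasDerivAt (fun s => y' s ^ 2) (2 * y' t ^ 1 * y'' t) t := (hy' t ht).pow 2
    have h3 := h2.div (hf t ht) hfne
    have h4 := h1.add h3
    refine h4.congr_deriv ?_
    have hode' : y'' t = -(f t * y t) := by linarith [hode t ht]
    rw [hode']
    field_simp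
    ring
  have hucont : ContinuousOn u (Set.Ici a) := fun t ht =>
    ((hderiv t ht).differentiableAt.continuousAt).continuousWithinAt
  have hudiff : DifferentiableOn ℝ u (interior (Set.Ici a)) := by
    rw [interior_Ici]
    exact fun t ht => ((hderiv t (le_of_lt ht)).differentiableAt).differentiableWithinAt
  have hueq : ∀ t₀, y' t₀ = 0 → u t₀ = y t₀ ^ 2 := by
    intro t₀ h0; simp [hu, h0]
  have habs : ∀ s t : ℝ, s ^ 2 ≤ t ^ 2 → |s| ≤ |t| := by
    intro s t h
    nlinarith [abs_nonneg s, abs_nonneg t, sq_abs s, sq_abs t]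
  refine ⟨hderiv, ?_, ?_⟩
  · intro hmono t₀ t₁ ht₀ h01 h0 h1
    have hua : AntitoneOn u (Set.Ici a) := by
      apply antitoneOn_of_deriv_nonpos (convex_Ici a) hucont hudiff
      intro t ht
      rw [interior_Ici] at ht
      have ht' : a ≤ t := le_of_lt ht
      rw [(hderiv t ht').deriv]
      have : 0 ≤ f' t := slope_deriv_nonneg a t (f' t) ht' hmono (hf t ht')
      nlinarith [sq_nonneg (y' t / f t)]
    have := hua ht₀ (le_trans ht₀ h01.le : a ≤ t₁) h01.le
    rw [hueq t₀ h0, hueq t₁ h1] at this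
    exact habs _ _ this
  · intro hanti t₀ t₁ ht₀ h01 h0 h1
    have hua : MonotoneOn u (Set.Ici a) := by
      apply monotoneOn_of_deriv_nonneg (convex_Ici a) hucont hudiff
      intro t ht
      rw [interior_Ici] at ht
      have ht' : a ≤ t := le_of_lt ht
      rw [(hderiv t ht').deriv]
      have : f' t ≤ 0 := slope_deriv_nonpos a t (f' t) ht' hanti (hf t ht')
      nlinarith [sq_nonneg (y' t / f t)]
    have := hua ht₀ (le_trans ht₀ h01.le : a ≤ t₁) h01.le
    rw [hueq t₀ h0, hueq t₁ h1] at this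
    exact habs _ _ this
end
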